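/- Let n ≥ 1, let a, b ≤ n and a′, b′ ≤ n′ with n′ ≤ n, a ≤ a′, b ≤ b′. Let X(n,a,b) be the number of edges between a fixed a-subset A of U and a fixed b-subset B of V in a uniformly random perfect matching of the complete bipartite graph with parts U, V of size n each. Then X(n,a,b) is stochastically dominated by X(n′,a′,b′): for every t, P(X(n,a,b) ≥ t) ≤ P(X(n′,a′,b′) ≥ t). -/

import Mathlib

open Finset

def cnt15 (n a b : ℕ) (σ : Equiv.Perm (Fin n)) : ℕ :=
  (Finset.univ.filter (fun i : Fin n => (i : ℕ) < a ∧ ((σ i : ℕ) < b))).card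

def good15 (n a b t : ℕ) : Finset (Equiv.Perm (Fin n)) :=
  Finset.univ.filter (fun σ => t ≤ cnt15 n a b σ)

def phi15 (m : ℕ) (σ : Equiv.Perm (Fin (m+1))) : Equiv.Perm (Fin m) where
  toFun i := Fin.castPred (Equiv.swap (σ (Fin.last m)) (Fin.last m) (σ i.castSucc)) (by
    intro h
    have h2 : Equiv.swap (σ (Fin.last m)) (Fin.last m) (σ (Fin.last m)) = Fin.last m :=
      Equiv.swap_apply_left _ _
    have h3 := (Equiv.swap (σ (Fin.last m)) (Fin.last m)).injective (h.trans h2.symm)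
    exact (Fin.castSucc_lt_last i).ne (σ.injective h3))
  invFun i := Fin.castPred (σ⁻¹ (Equiv.swap (σ (Fin.last m)) (Fin.last m) i.castSucc)) (by
    intro h
    have h1 : σ (σ⁻¹ (Equiv.swap (σ (Fin.last m)) (Fin.last m) i.castSucc)) = σ (Fin.last m) := by
      rw [h]
    rw [← Equiv.Perm.mul_apply, mul_inv_cancel, Equiv.Perm.one_apply] at h1
    have h2 : Equiv.swap (σ (Fin.last m)) (Fin.last m) (Fin.last m) = σ (Fin.last m) :=
      Equiv.swap_apply_right _ _
    have h3 := (Equiv.swap (σ (Fin.last m)) (Fin.last m)).injective (h1.trans h2.symm)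
    exact (Fin.castSucc_lt_last i).ne h3)
  left_inv i := by
    simp [Fin.castSucc_castPred, Equiv.swap_apply_self]
  right_inv i := by
    simp [Fin.castSucc_castPred, Equiv.swap_apply_self]

lemma phi15_val {m : ℕ} (σ : Equiv.Perm (Fin (m+1))) (j : Fin m)
    (h : σ j.castSucc ≠ Fin.last m) :
    ((phi15 m σ j : Fin m) : ℕ) = ((σ j.castSucc : Fin (m+1)) : ℕ) := by
  have hne : σ j.castSucc ≠ σ (Fin.last m) := fun hh =>
    (Fin.castSucc_lt_last j).ne (σ.injective hh)
  simp only [phi15, Equiv.coe_fn_mk, Fin.coe_castPred]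
  rw [Equiv.swap_apply_of_ne_of_ne hne h]

lemma phi15_inj {m : ℕ} :
    Function.Injective (fun σ : Equiv.Perm (Fin (m+1)) => (phi15 m σ, σ (Fin.last m))) := by
  intro σ σ' h
  simp only [Prod.mk.injEq] at h
  obtain ⟨h1, h2⟩ := h
  refine Equiv.ext fun i => ?_
  refine Fin.lastCases ?_ (fun j => ?_) i
  · exact h2
  · have := congrArg (fun e : Equiv.Perm (Fin m) => Fin.castSucc (e j)) h1
    simp only [phi15, Equiv.coe_fn_mk, Fin.castSucc_castPred] at this
    rw [h2] at this
    exact (Equiv.swap _ _).injective this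

lemma cnt15_le_phi {m a b : ℕ} (ha : a ≤ m) (hb : b ≤ m) (σ : Equiv.Perm (Fin (m+1))) :
    cnt15 (m+1) a b σ ≤ cnt15 m a b (phi15 m σ) := by
  unfold cnt15
  have hsub : (univ.filter fun i : Fin (m+1) => (i:ℕ) < a ∧ ((σ i : ℕ) < b))
      ⊆ (univ.filter fun j : Fin m => (j:ℕ) < a ∧ (((phi15 m σ) j : ℕ) < b)).map
          Fin.castSuccEmb := by
    intro i hi
    simp only [mem_filter, mem_univ, true_and] at hi
    have hne : i ≠ Fin.last m := by
      intro h
      rw [h] at hi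
      simp only [Fin.val_last] at hi
      omega
    refine Finset.mem_map.2 ⟨i.castPred hne, ?_, ?_⟩
    · simp only [mem_filter, mem_univ, true_and]
      have hcs : Fin.castSucc (i.castPred hne) = i := Fin.castSucc_castPred _ _
      have hσ : σ (Fin.castSucc (i.castPred hne)) ≠ Fin.last m := by
        rw [hcs]
        intro h
        rw [h] at hi
        simp only [Fin.val_last] at hi
        omega
      constructor
      · simpa using hi.1
      · rw [phi15_val σ _ hσ, hcs]
        exact hi.2
    · exact Fin.castSucc_castPred i hne
  calc (univ.filter fun i : Fin (m+1) => (i:ℕ) < a ∧ ((σ i : ℕ) < b)).card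
      ≤ ((univ.filter fun j : Fin m => (j:ℕ) < a ∧ (((phi15 m σ) j : ℕ) < b)).map
          Fin.castSuccEmb).card := Finset.card_le_card hsub
    _ = _ := Finset.card_map _

lemma good15_step {m a b t : ℕ} (ha : a ≤ m) (hb : b ≤ m) :
    (good15 (m+1) a b t).card ≤ (m+1) * (good15 m a b t).card := by
  have hfib : ∀ v ∈ (good15 (m+1) a b t).image (phi15 m),
      ((good15 (m+1) a b t).filter (fun σ => phi15 m σ = v)).card ≤ m+1 := by
    intro v _
    have : ((good15 (m+1) a b t).filter (fun σ => phi15 m σ = v)).card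
        ≤ (univ : Finset (Fin (m+1))).card := by
      apply Finset.card_le_card_of_injOn (fun σ => σ (Fin.last m)) (fun _ _ => mem_univ _)
      intro σ hσ σ' hσ' h
      simp only [mem_coe, mem_filter] at hσ hσ'
      exact phi15_inj (by simp [hσ.2, hσ'.2, h] : (phi15 m σ, σ (Fin.last m)) = _)
    simpa using this
  have h1 := Finset.card_le_mul_card_image (good15 (m+1) a b t) (m+1) hfib
  have h2 : (good15 (m+1) a b t).image (phi15 m) ⊆ good15 m a b t := by
    intro v hv
    obtain ⟨σ, hσ, rfl⟩ := Finset.mem_image.1 hv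
    simp only [good15, mem_filter, mem_univ, true_and] at hσ ⊢
    exact hσ.trans (cnt15_le_phi ha hb σ)
  calc (good15 (m+1) a b t).card ≤ (m+1) * ((good15 (m+1) a b t).image (phi15 m)).card := h1
    _ ≤ (m+1) * (good15 m a b t).card := Nat.mul_le_mul_left _ (Finset.card_le_card h2)

lemma good15_mono {n a b a' b' t : ℕ} (haa : a ≤ a') (hbb : b ≤ b') :
    (good15 n a b t).card ≤ (good15 n a' b' t).card := by
  apply Finset.card_le_card
  intro σ hσ
  simp only [good15, mem_filter, mem_univ, true_and] at hσ ⊢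
  refine hσ.trans (Finset.card_le_card ?_)
  intro i hi
  simp only [mem_filter, mem_univ, true_and] at hi ⊢
  exact ⟨hi.1.trans_le haa, hi.2.trans_le hbb⟩

lemma good15_down {n' a b t : ℕ} (ha : a ≤ n') (hb : b ≤ n') :
    ∀ d, (good15 (n'+d) a b t).card * n'.factorial
      ≤ (good15 n' a b t).card * (n'+d).factorial := by
  intro d
  induction d with
  | zero => simp
  | succ d ih =>
      have hstep := good15_step (a := a) (b := b) (t := t)
        (ha.trans (Nat.le_add_right n' d)) (hb.trans (Nat.le_add_right n' d))
      calc (good15 (n'+(d+1)) a b t).card * n'.factorial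
          ≤ ((n'+d+1) * (good15 (n'+d) a b t).card) * n'.factorial := by
            have : n' + (d+1) = (n'+d) + 1 := by omega
            rw [this]
            exact Nat.mul_le_mul_right _ hstep
        _ = (n'+d+1) * ((good15 (n'+d) a b t).card * n'.factorial) := by ring
        _ ≤ (n'+d+1) * ((good15 n' a b t).card * (n'+d).factorial) :=
            Nat.mul_le_mul_left _ ih
        _ = (good15 n' a b t).card * ((n'+d+1) * (n'+d).factorial) := by ring
        _ = (good15 n' a b t).card * (n'+(d+1)).factorial := by
            rw [show n'+(d+1) = (n'+d)+1 from by omega, Nat.factorial_succ]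



/-- A directed cycle of length `n` in the digraph with arc relation `A`:
an injective map `f : ZMod n → V` with an arc from each vertex to the next. -/
def IsDicycle {V : Type*} (A : V → V → Prop) (n : ℕ) (f : ZMod n → V) : Prop :=
  0 < n ∧ Function.Injective f ∧ ∀ i, A (f i) (f (i + 1))

/-- A set of vertices is acyclic if it contains no directed cycle. -/
def AcyclicSet {V : Type*} (A : V → V → Prop) (S : Set V) : Prop :=
  ∀ (n : ℕ) (f : ZMod n → V), (∀ i, f i ∈ S) → ¬ IsDicycle A n f

/-- The dichromatic number: least `k` such that the vertices can be colored with `k`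
colors with every color class acyclic. -/
noncomputable def dichromatic {V : Type*} (A : V → V → Prop) : ℕ :=
  sInf {k | ∃ c : V → Fin k, ∀ i, AcyclicSet A (c ⁻¹' {i})}

/-- The maximum size of an acyclic set of vertices. -/
noncomputable def maxAcyclic {V : Type*} [Fintype V] (A : V → V → Prop) : ℕ :=
  sSup {k | ∃ S : Finset V, AcyclicSet A ↑S ∧ S.card = k}

/-- Let `X(n,a,b)` count, in a uniformly random perfect matching of
`K_{n,n}` (a uniform permutation of `Fin n`), the edges between the first `a` vertices of
one side and the first `b` of the other. If `n' ≤ n`, `a ≤ a'`, `b ≤ b'` (with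
`a,b ≤ n`, `a',b' ≤ n'`), then `X(n,a,b)` is stochastically dominated by `X(n',a',b')`:
for every `t`, `P(X(n,a,b) ≥ t) ≤ P(X(n',a',b') ≥ t)`. -/
theorem stmt15 (n n' a b a' b' : ℕ) (hn' : 1 ≤ n') (hnn : n' ≤ n)
    (ha : a ≤ n) (hb : b ≤ n) (ha' : a' ≤ n') (hb' : b' ≤ n')
    (haa : a ≤ a') (hbb : b ≤ b') (t : ℕ) :
    ((Finset.univ.filter (fun σ : Equiv.Perm (Fin n) =>
        t ≤ (Finset.univ.filter
          (fun i : Fin n => (i : ℕ) < a ∧ ((σ i : ℕ) < b))).card)).card : ℝ)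
      / (Nat.factorial n) ≤
    ((Finset.univ.filter (fun σ : Equiv.Perm (Fin n') =>
        t ≤ (Finset.univ.filter
          (fun i : Fin n' => (i : ℕ) < a' ∧ ((σ i : ℕ) < b'))).card)).card : ℝ)
      / (Nat.factorial n') := by
  show ((good15 n a b t).card : ℝ) / n.factorial ≤ ((good15 n' a' b' t).card : ℝ) / n'.factorial
  rw [div_le_div_iff₀ (by positivity) (by positivity)]
  have key : (good15 n a b t).card * n'.factorial ≤ (good15 n' a' b' t).card * n.factorial := by
    obtain ⟨d, rfl⟩ := Nat.exists_eq_add_of_le hnn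
    calc (good15 (n'+d) a b t).card * n'.factorial
        ≤ (good15 n' a b t).card * (n'+d).factorial :=
          good15_down (haa.trans ha') (hbb.trans hb') d
      _ ≤ (good15 n' a' b' t).card * (n'+d).factorial :=
          Nat.mul_le_mul_right _ (good15_mono haa hbb)
  exact_mod_cast key
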